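/- Let G = (V,E) be a temporal graph, s, z ∈ V, δ ∈ ℕ, and D ⊆ E. Let G* = (V, E ∪ E*) where E* = {(v,w,t,λ+δ) : (v,w,t,λ) ∈ E}, and let G*_D = (V, (E \ D) ∪ E*). Then there is a D-delayed temporal walk from s to z in G if and only if there is a temporal walk from s to z in G*_D. -/

import Mathlib

/-- A time arc of a temporal graph: start vertex, end vertex, time label, traversal time. -/
structure TimeArc (V : Type) where
  src : V
  dst : V
  time : ℕ
  trav : ℕ
deriving DecidableEq

/-- Two consecutive time arcs of a temporal walk. -/
def walkStep {V : Type} (e f : TimeArc V) : Prop :=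
  e.dst = f.src ∧ e.time + e.trav ≤ f.time

/-- `W` is a temporal walk from `s` to `z` in the temporal graph with time arc set `E`. -/
def IsTemporalWalk {V : Type} (E : Finset (TimeArc V)) (s z : V)
    (W : List (TimeArc V)) : Prop :=
  W ≠ [] ∧ (∀ e ∈ W, e ∈ E) ∧ W.Chain' walkStep ∧
    (∀ e, W.head? = some e → e.src = s) ∧
    (∀ e, W.getLast? = some e → e.dst = z)

/-- Delaying a single time arc: if it belongs to the delay set `D`, its traversal
time is increased by `δ`. -/
def delayArc {V : Type} [DecidableEq V] (D : Finset (TimeArc V)) (δ : ℕ)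
    (e : TimeArc V) : TimeArc V :=
  if e ∈ D then ⟨e.src, e.dst, e.time, e.trav + δ⟩ else e

/-- The temporal graph obtained from `E` by delaying every time arc in `D` by `δ`. -/
def delayGraph {V : Type} [DecidableEq V] (E D : Finset (TimeArc V)) (δ : ℕ) :
    Finset (TimeArc V) :=
  E.image (delayArc D δ)

/-- `E* = {(v,w,t,λ+δ) : (v,w,t,λ) ∈ E}`: every time arc of `E` delayed by `δ`. -/
def delayedCopies {V : Type} [DecidableEq V] (E : Finset (TimeArc V)) (δ : ℕ) :
    Finset (TimeArc V) :=
  E.image (fun e => ⟨e.src, e.dst, e.time, e.trav + δ⟩)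

def arcRel {V : Type} (F : Finset (TimeArc V)) (e e' : TimeArc V) : Prop :=
  e' ∈ F ∧ e'.src = e.src ∧ e'.dst = e.dst ∧ e'.time = e.time ∧ e'.trav ≤ e.trav

lemma exists_forall2 {V : Type} (F : Finset (TimeArc V)) :
    ∀ W : List (TimeArc V), (∀ e ∈ W, ∃ e', arcRel F e e') →
      ∃ W', List.Forall₂ (arcRel F) W W' := by
  intro W
  induction W with
  | nil => exact fun _ => ⟨[], List.Forall₂.nil⟩
  | cons a l ih =>
    intro h
    obtain ⟨a', ha'⟩ := h a List.mem_cons_self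
    obtain ⟨l', hl'⟩ := ih fun e he => h e (List.mem_cons_of_mem _ he)
    exact ⟨a' :: l', List.Forall₂.cons ha' hl'⟩

lemma chain_transfer {V : Type} (F : Finset (TimeArc V)) :
    ∀ {W W' : List (TimeArc V)}, List.Forall₂ (arcRel F) W W' →
      W.Chain' walkStep → W'.Chain' walkStep := by
  intro W W' h
  induction h with
  | nil => intro _; exact List.isChain_nil
  | @cons a a' l l' hr hf ih =>
    intro hc
    cases hf with
    | nil => exact List.isChain_singleton _
    | @cons b b' m m' hrb hfm =>
      rw [List.Chain', List.isChain_cons_cons] at hc ⊢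
      refine ⟨⟨?_, ?_⟩, ih hc.2⟩
      · exact hr.2.2.1.trans (hc.1.1.trans hrb.2.1.symm)
      · rw [hr.2.2.2.1, hrb.2.2.2.1]
        calc a.time + a'.trav ≤ a.time + a.trav := Nat.add_le_add_left hr.2.2.2.2 _
          _ ≤ b.time := hc.1.2


lemma forall2_mem_right {V : Type} (F : Finset (TimeArc V)) :
    ∀ {W W' : List (TimeArc V)}, List.Forall₂ (arcRel F) W W' →
      ∀ e ∈ W', ∃ a ∈ W, arcRel F a e := by
  intro W W' h
  induction h with
  | nil => intro e he; exact absurd he List.not_mem_nil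
  | @cons a a' l l' hr _ ih =>
    intro e he
    rcases List.mem_cons.mp he with rfl | he
    · exact ⟨a, List.mem_cons_self, hr⟩
    · obtain ⟨b, hb, hrb⟩ := ih e he
      exact ⟨b, List.mem_cons_of_mem _ hb, hrb⟩

lemma forall2_head {V : Type} (F : Finset (TimeArc V)) {W W' : List (TimeArc V)}
    (h : List.Forall₂ (arcRel F) W W') {e : TimeArc V} (he : W'.head? = some e) :
    ∃ a, W.head? = some a ∧ arcRel F a e := by
  cases h with
  | nil => simp at he
  | cons hr _ =>
    simp only [List.head?_cons, Option.some_inj] at he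
    exact ⟨_, rfl, he ▸ hr⟩

lemma walk_transfer {V : Type} (F F' : Finset (TimeArc V)) (s z : V)
    (h : ∀ e ∈ F', ∃ e' ∈ F, e'.src = e.src ∧ e'.dst = e.dst ∧ e'.time = e.time ∧ e'.trav ≤ e.trav) :
    (∃ W, IsTemporalWalk F' s z W) → ∃ W, IsTemporalWalk F s z W := by
  rintro ⟨W, hne, hmem, hchain, hhead, hlast⟩
  obtain ⟨W', hW'⟩ := exists_forall2 F W fun e he => by
    obtain ⟨e', he', h1, h2, h3, h4⟩ := h e (hmem e he)
    exact ⟨e', he', h1, h2, h3, h4⟩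
  refine ⟨W', ?_, ?_, chain_transfer F hW' hchain, ?_, ?_⟩
  · intro hWnil; subst hWnil; cases hW'; exact hne rfl
  · intro e he
    obtain ⟨a, _, hr⟩ := forall2_mem_right F hW' e he
    exact hr.1
  · intro e he
    obtain ⟨a, ha, hr⟩ := forall2_head F hW' he
    exact hr.2.1.trans (hhead a ha)
  · intro e he
    have hrev : List.Forall₂ (arcRel F) W.reverse W'.reverse :=
      List.forall₂_reverse_iff.mpr hW'
    rw [← List.head?_reverse] at he
    obtain ⟨a, ha, hr⟩ := forall2_head F hrev he
    rw [List.head?_reverse] at ha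
    exact hr.2.2.1.trans (hlast a ha)

/-- Let `G = (V,E)` be a temporal graph, `s, z ∈ V`, `δ ∈ ℕ`, `D ⊆ E`, let
`G* = (V, E ∪ E*)` with `E* = {(v,w,t,λ+δ) : (v,w,t,λ) ∈ E}` and
`G*_D = (V, (E \ D) ∪ E*)`. Then there is a `D`-delayed temporal walk from `s` to
`z` in `G` if and only if there is a temporal walk from `s` to `z` in `G*_D`. -/
theorem delayed_walk_iff_walk_in_starred {V : Type} [DecidableEq V]
    (E : Finset (TimeArc V)) (s z : V) (δ : ℕ)
    (D : Finset (TimeArc V)) (hD : D ⊆ E) :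
    (∃ W : List (TimeArc V), IsTemporalWalk (delayGraph E D δ) s z W) ↔
      (∃ W : List (TimeArc V),
        IsTemporalWalk ((E \ D) ∪ delayedCopies E δ) s z W) := by
  constructor
  · refine walk_transfer _ _ s z ?_
    intro e he
    refine ⟨e, ?_, rfl, rfl, rfl, le_refl _⟩
    obtain ⟨a, ha, hae⟩ := Finset.mem_image.mp he
    by_cases hd : a ∈ D
    · refine Finset.mem_union_right _ (Finset.mem_image.mpr ⟨a, ha, ?_⟩)
      rw [← hae]; simp [delayArc, hd]
    · refine Finset.mem_union_left _ (Finset.mem_sdiff.mpr ⟨?_, ?_⟩)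
      · rw [← hae]; simpa [delayArc, hd] using ha
      · rw [← hae]; simpa [delayArc, hd] using hd
  · refine walk_transfer _ _ s z ?_
    intro e he
    rcases Finset.mem_union.mp he with he | he
    · obtain ⟨heE, heD⟩ := Finset.mem_sdiff.mp he
      refine ⟨e, Finset.mem_image.mpr ⟨e, heE, ?_⟩, rfl, rfl, rfl, le_refl _⟩
      simp [delayArc, heD]
    · obtain ⟨a, ha, hae⟩ := Finset.mem_image.mp he
      refine ⟨delayArc D δ a, Finset.mem_image.mpr ⟨a, ha, rfl⟩, ?_, ?_, ?_, ?_⟩ <;>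
        · subst hae
          by_cases hd : a ∈ D <;> simp [delayArc, hd]
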